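/- In a doubling metric measure space, if E and F are both μ-neighborhoods of a point x, then E ∩ F is also a μ-neighborhood of x. Consequently, the μ-neighborhoods define a topology on X finer than the metric topology. -/

import Mathlib

open Metric MeasureTheory Set Filter Topology ENNReal NNReal

/-- A `K`-doubling metric measure space structure on a metric space `X`:
a Borel-regular outer measure `μ` with `0 < μ(B_{2r}(x)) ≤ K·μ(B_r(x)) < ∞`. -/
structure IsDoubling {X : Type*} [MetricSpace X] [MeasurableSpace X] [BorelSpace X]
    (μ : MeasureTheory.OuterMeasure X) (K : ℝ≥0∞) : Prop where
  borel_caratheodory : ∀ B : Set X, MeasurableSet B → MeasurableSet[μ.caratheodory] B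
  borel_regular : ∀ s : Set X, ∃ B : Set X, MeasurableSet B ∧ s ⊆ B ∧ μ B = μ s
  ball_pos : ∀ (x : X) (r : ℝ), 0 < r → 0 < μ (Metric.ball x r)
  ball_lt_top : ∀ (x : X) (r : ℝ), 0 < r → μ (Metric.ball x r) < ⊤
  doubling : ∀ (x : X) (r : ℝ), 0 < r → μ (Metric.ball x (2 * r)) ≤ K * μ (Metric.ball x r)

/-- `E` is a `μ`-neighborhood of `x`: `x ∈ E` and there is a Borel set `B ⊆ E`
whose complement has density `0` at `x`. -/
def MuNhd {X : Type*} [MetricSpace X] [MeasurableSpace X]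
    (μ : MeasureTheory.OuterMeasure X) (x : X) (E : Set X) : Prop :=
  x ∈ E ∧ ∃ B : Set X, MeasurableSet B ∧ B ⊆ E ∧
    Filter.Tendsto (fun r : ℝ => μ (Metric.ball x r \ B) / μ (Metric.ball x r))
      (nhdsWithin 0 (Set.Ioi 0)) (nhds 0)

/-- the intersection of two `μ`-neighborhoods of `x` is a `μ`-neighborhood of `x`;
moreover every metric neighborhood is a `μ`-neighborhood, so the `μ`-neighborhoods define a
topology finer than the metric topology. -/
theorem stmt3 {X : Type*} [MetricSpace X] [CompleteSpace X] [TopologicalSpace.SeparableSpace X]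
    [MeasurableSpace X] [BorelSpace X]
    (μ : MeasureTheory.OuterMeasure X) (K : ℝ≥0∞) (hμ : IsDoubling μ K) (x : X) :
    (∀ E F : Set X, MuNhd μ x E → MuNhd μ x F → MuNhd μ x (E ∩ F)) ∧
    (∀ U : Set X, IsOpen U → x ∈ U → MuNhd μ x U) := by
  constructor
  · rintro E F ⟨hxE, BE, hBE, hBEE, hE⟩ ⟨hxF, BF, hBF, hBFF, hF⟩
    refine ⟨⟨hxE, hxF⟩, BE ∩ BF, hBE.inter hBF, inter_subset_inter hBEE hBFF, ?_⟩
    have hle : ∀ r : ℝ,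
        μ (Metric.ball x r \ (BE ∩ BF)) / μ (Metric.ball x r) ≤
        μ (Metric.ball x r \ BE) / μ (Metric.ball x r) +
          μ (Metric.ball x r \ BF) / μ (Metric.ball x r) := by
      intro r
      rw [← ENNReal.add_div]
      refine ENNReal.div_le_div_right ?_ _
      refine le_trans (measure_mono ?_) (measure_union_le _ _)
      intro y hy
      rcases Classical.em (y ∈ BE) with h | h
      · exact Or.inr ⟨hy.1, fun hb => hy.2 ⟨h, hb⟩⟩
      · exact Or.inl ⟨hy.1, h⟩
    have hsum := hE.add hF
    rw [add_zero] at hsum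
    exact tendsto_of_tendsto_of_tendsto_of_le_of_le' tendsto_const_nhds hsum
      (Eventually.of_forall fun r => zero_le) (Eventually.of_forall hle)
  · intro U hU hxU
    obtain ⟨ε, hε, hball⟩ := Metric.isOpen_iff.1 hU x hxU
    refine ⟨hxU, Metric.ball x ε, measurableSet_ball, hball, ?_⟩
    have hev : ∀ᶠ r : ℝ in nhdsWithin 0 (Set.Ioi 0),
        μ (Metric.ball x r \ Metric.ball x ε) / μ (Metric.ball x r) = 0 := by
      filter_upwards [Ico_mem_nhdsGT_of_mem (by exact ⟨le_refl 0, hε⟩ : (0:ℝ) ∈ Set.Ico 0 ε)]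
        with r hr
      have : Metric.ball x r \ Metric.ball x ε = ∅ := by
        rw [diff_eq_empty]
        exact Metric.ball_subset_ball hr.2.le
      simp [this]
    exact Tendsto.congr' (hev.mono fun r h => h.symm) tendsto_const_nhds
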